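/- Let k be a positive integer and H a finite abelian group with |H| < 2^k. Then the group G = (ℤ/2ℤ)^k × H admits no AP-destroying permutation. -/

import Mathlib

/-- A permutation `π` of a finite abelian group `G` is *AP-destroying* if it preserves no
3-term arithmetic progression `(a, a+r, a+2r)` with `r ≠ 0`, i.e. there are no `a, r` with
`r ≠ 0` and `π(a) - 2·π(a+r) + π(a+2r) = 0`. -/
def APDestroying {G : Type*} [AddCommGroup G] (π : Equiv.Perm G) : Prop :=
  ∀ a r : G, r ≠ 0 → π a - 2 • π (a + r) + π (a + 2 • r) ≠ 0

theorem no_apDestroying_of_large_two_torsion (k : ℕ) (hk : 0 < k)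
    (H : Type*) [AddCommGroup H] [Fintype H] (hH : Fintype.card H < 2 ^ k) :
    ¬ ∃ π : Equiv.Perm ((Fin k → ZMod 2) × H), APDestroying π := by
  rintro ⟨π, hπ⟩
  classical
  set T : Finset ((Fin k → ZMod 2) × H) :=
    Finset.univ.filter (fun x => 2 • x = 0) with hT
  have hmemT : ∀ x : (Fin k → ZMod 2) × H, x ∈ T ↔ 2 • x = 0 := by
    intro x
    rw [hT, Finset.mem_filter]
    exact ⟨fun h => h.2, fun h => ⟨Finset.mem_univ _, h⟩⟩
  -- the map (s, t) ↦ π s + t is injective on T ×ˢ T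
  have hinj : Set.InjOn (fun p : ((Fin k → ZMod 2) × H) × ((Fin k → ZMod 2) × H) =>
      π p.1 + p.2) ↑(T ×ˢ T) := by
    rintro ⟨s₁, t₁⟩ hp ⟨s₂, t₂⟩ hq heq
    simp only [Finset.coe_product, Set.mem_prod, Finset.mem_coe, hmemT] at hp hq
    simp only at heq
    have hs : s₁ = s₂ := by
      by_contra hne
      have hr : s₂ - s₁ ≠ 0 := sub_ne_zero.mpr (fun h => hne h.symm)
      have h2r : 2 • (s₂ - s₁) = 0 := by
        rw [smul_sub, hp.1, hq.1, sub_zero]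
      have key := hπ s₁ (s₂ - s₁) hr
      have e1 : s₁ + (s₂ - s₁) = s₂ := by abel
      have e2 : s₁ + 2 • (s₂ - s₁) = s₁ := by rw [h2r, add_zero]
      rw [e1, e2] at key
      apply key
      have hps : π s₂ = π s₁ + (t₁ - t₂) := by
        rw [← add_sub_assoc]; exact eq_sub_of_add_eq heq.symm
      rw [hps, smul_add, smul_sub, hp.2, hq.2]
      abel
    subst hs
    have ht : t₁ = t₂ := add_left_cancel heq
    rw [ht]
  have h1 : (T ×ˢ T).card ≤ Fintype.card ((Fin k → ZMod 2) × H) :=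
    le_trans (Finset.card_le_card_of_injOn _ (fun p _ => Finset.mem_univ _) hinj)
      (by simp)
  -- 2^k ≤ T.card via the injection v ↦ (v, 0)
  have h2 : 2 ^ k ≤ T.card := by
    have hle : (Finset.univ : Finset (Fin k → ZMod 2)).card ≤ T.card := by
      apply Finset.card_le_card_of_injOn (fun v => ((v, 0) : (Fin k → ZMod 2) × H))
      · intro v _
        rw [Finset.mem_coe, hmemT]
        refine Prod.ext ?_ ?_
        · show (2 • v) = 0
          funext i
          simp [two_smul, CharTwo.add_self_eq_zero]
        · show (2 • (0 : H)) = 0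
          simp
      · intro a _ b _ hab
        exact congrArg Prod.fst hab
    simpa using hle
  have hcardG : Fintype.card ((Fin k → ZMod 2) × H) = 2 ^ k * Fintype.card H := by
    simp [Fintype.card_prod]
  have hprod : (T ×ˢ T).card = T.card * T.card := Finset.card_product T T
  have hfinal : 2 ^ k * 2 ^ k ≤ 2 ^ k * Fintype.card H := by
    calc 2 ^ k * 2 ^ k ≤ T.card * T.card := Nat.mul_le_mul h2 h2
      _ = (T ×ˢ T).card := hprod.symm
      _ ≤ Fintype.card ((Fin k → ZMod 2) × H) := h1
      _ = 2 ^ k * Fintype.card H := hcardG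
  have h2k : 0 < 2 ^ k := Nat.pow_pos (by norm_num)
  have := Nat.le_of_mul_le_mul_left hfinal h2k
  omega
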